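/- Let G be a finite group, n ≥ 1, and m a positive integer such that m·H_n(G,ℤ) = 0. Then every class in H^n(G,U(1)) has a representative n-cocycle taking values in the subgroup μ_m ≤ U(1) of m-th roots of unity; equivalently, the map H^n(G, μ_m) → H^n(G, U(1)) induced by the inclusion μ_m ↪ U(1) is surjective. -/

import Mathlib

namespace DT

variable {G : Type*} [Group G] {A : Type*} [AddCommGroup A]

/-- Merge positions `i` and `i+1` of an `(n+1)`-tuple (bar-complex face map):
for `j < i` entry `g j`, at `j = i` entry `g i * g (i+1)`, for `j > i` entry `g (j+1)`. -/
def barMerge {n : ℕ} (g : Fin (n+1) → G) (i : Fin n) : Fin n → G :=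
  fun j => if (j : ℕ) < (i : ℕ) then g j.castSucc
    else if (j : ℕ) = (i : ℕ) then g j.castSucc * g j.succ
    else g j.succ

/-- The inhomogeneous (bar) coboundary of an `n`-cochain with values in a trivial module:
`(δω)(g_1,…,g_{n+1}) = ω(g_2,…,g_{n+1}) + Σ_{i=1}^{n} (−1)^i ω(g_1,…,g_i g_{i+1},…,g_{n+1})
 + (−1)^{n+1} ω(g_1,…,g_n)`. -/
def coboundary {n : ℕ} (ω : (Fin n → G) → A) : (Fin (n+1) → G) → A :=
  fun g => ω (fun j => g j.succ)
    + ∑ i : Fin n, ((-1 : ℤ) ^ ((i : ℕ) + 1)) • ω (barMerge g i)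
    + ((-1 : ℤ) ^ (n+1)) • ω (fun j => g j.castSucc)

/-- An `n`-cocycle. -/
def IsCocycle {n : ℕ} (ω : (Fin n → G) → A) : Prop := coboundary ω = 0

/-- An `(n+1)`-coboundary. -/
def IsCoboundary {n : ℕ} (ω : (Fin (n+1) → G) → A) : Prop := ∃ α, ω = coboundary α

/-- A commuting tuple. -/
def IsCommTuple {n : ℕ} (g : Fin n → G) : Prop := ∀ i j, g i * g j = g j * g i

/-- The Dijkgraaf–Witten weight `W_ω(𝐠) = Σ_{σ ∈ S_n} sgn(σ) • ω(g_{σ(1)},…,g_{σ(n)})`. -/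
def dwWeight {n : ℕ} (ω : (Fin n → G) → A) (g : Fin n → G) : A :=
  ∑ σ : Equiv.Perm (Fin n), ((Equiv.Perm.sign σ : ℤ)) • ω (g ∘ σ)

end DT

namespace DT

/-- The bar chain group `C_n(G)`: the free abelian group on `n`-tuples `[g_1|…|g_n]`. -/
abbrev BarChain (G : Type*) (n : ℕ) := (Fin n → G) →₀ ℤ

variable (G : Type*) [Group G]

/-- The bar differential `∂_{n+1} : C_{n+1}(G) → C_n(G)`,
`∂[g_1|…|g_{n+1}] = [g_2|…|g_{n+1}] + Σ_{i=1}^{n} (−1)^i [g_1|…|g_i g_{i+1}|…|g_{n+1}]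
 + (−1)^{n+1} [g_1|…|g_n]`. -/
noncomputable def barD (n : ℕ) : BarChain G (n+1) →ₗ[ℤ] BarChain G n :=
  (Finsupp.lift (BarChain G n) ℤ (Fin (n+1) → G)) (fun g =>
    Finsupp.single (fun j => g j.succ) 1
    + ∑ i : Fin n, ((-1 : ℤ) ^ ((i : ℕ) + 1)) • Finsupp.single (barMerge g i) 1
    + ((-1 : ℤ) ^ (n+1)) • Finsupp.single (fun j => g j.castSucc) 1)

/-- The `(n+1)`-cycles `Z_{n+1} = ker ∂_{n+1}`. -/
noncomputable def cycles (n : ℕ) : Submodule ℤ (BarChain G (n+1)) := LinearMap.ker (barD G n)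

/-- The `(n+1)`-boundaries `B_{n+1} = im ∂_{n+2}`. -/
noncomputable def boundaries (n : ℕ) : Submodule ℤ (BarChain G (n+1)) :=
  LinearMap.range (barD G (n+1))

/-- The alternating chain `Σ_{σ ∈ S_n} sgn(σ)·[g_{σ(1)}|…|g_{σ(n)}]`. -/
noncomputable def altCycle {n : ℕ} (g : Fin n → G) : BarChain G n :=
  ∑ σ : Equiv.Perm (Fin n), ((Equiv.Perm.sign σ : ℤ)) • Finsupp.single (g ∘ σ) (1 : ℤ)

/-- `Z_{0n} ⊆ C_n(G)`: the subgroup generated by the alternating chains of commuting tuples. -/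
noncomputable def Z0 (n : ℕ) : Submodule ℤ (BarChain G n) :=
  Submodule.span ℤ {x | ∃ g : Fin n → G, IsCommTuple g ∧ x = altCycle G g}

/-- Integral homology `H_{n+1}(G,ℤ) = Z_{n+1}/B_{n+1}`. -/
def Hgrp (n : ℕ) := cycles G n ⧸ ((boundaries G n).comap (cycles G n).subtype)

/-- `H_{0,n+1}(G,ℤ) = Z_{n+1}/(Z_{0,n+1} + B_{n+1})`. -/
def H0grp (n : ℕ) :=
  cycles G n ⧸ ((Z0 G (n+1) ⊔ boundaries G n).comap (cycles G n).subtype)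

noncomputable instance (n : ℕ) : AddCommGroup (Hgrp G n) := by unfold Hgrp; infer_instance
noncomputable instance (n : ℕ) : AddCommGroup (H0grp G n) := by unfold H0grp; infer_instance

/-- The natural projection `H_{n+1}(G,ℤ) → H_{0,n+1}(G,ℤ)`. -/
noncomputable def projH (n : ℕ) : Hgrp G n →ₗ[ℤ] H0grp G n :=
  Submodule.mapQ _ _ LinearMap.id
    (by
      intro x hx
      exact Submodule.mem_comap.mpr
        (Submodule.mem_sup_right (Submodule.mem_comap.mp hx)))

end DT

namespace DT

variable {G : Type*} [Group G]

/-- The inhomogeneous (bar) coboundary of a `U(1)`-valued `n`-cochain, written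
multiplicatively. -/
noncomputable def mcoboundary {n : ℕ} (ω : (Fin n → G) → Circle) : (Fin (n+1) → G) → Circle :=
  fun g => ω (fun j => g j.succ)
    * (∏ i : Fin n, ω (barMerge g i) ^ ((-1 : ℤ) ^ ((i : ℕ) + 1)))
    * ω (fun j => g j.castSucc) ^ ((-1 : ℤ) ^ (n+1))

/-- A `U(1)`-valued `n`-cocycle. -/
def IsMCocycle {n : ℕ} (ω : (Fin n → G) → Circle) : Prop := mcoboundary ω = 1

/-- A `U(1)`-valued `(n+1)`-coboundary. -/
def IsMCoboundary {n : ℕ} (ω : (Fin (n+1) → G) → Circle) : Prop := ∃ α, ω = mcoboundary α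

/-- The Dijkgraaf–Witten weight `W_ω(𝐠) = ∏_{σ ∈ S_n} ω(g_{σ(1)},…,g_{σ(n)})^{sgn(σ)}`. -/
noncomputable def mdwWeight {n : ℕ} (ω : (Fin n → G) → Circle) (g : Fin n → G) : Circle :=
  ∏ σ : Equiv.Perm (Fin n), ω (g ∘ σ) ^ ((Equiv.Perm.sign σ : ℤ))

end DT


namespace DT

universe u

variable {G : Type u} [Group G]

def face (n : ℕ) (i : ℕ) (g : Fin (n+1) → G) : Fin n → G :=
  fun j => if (j : ℕ) + 1 < i then g j.castSucc
    else if (j : ℕ) + 1 = i then g j.castSucc * g j.succ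
    else g j.succ

lemma face_zero (n : ℕ) (g : Fin (n+1) → G) : face n 0 g = fun j => g j.succ := by
  funext j; simp [face]

lemma face_last (n : ℕ) (g : Fin (n+1) → G) : face n (n+1) g = fun j => g j.castSucc := by
  funext j; simp [face, Nat.succ_lt_succ j.isLt]

lemma face_succ (n : ℕ) (g : Fin (n+1) → G) (i : Fin n) :
    face n ((i:ℕ)+1) g = barMerge g i := by
  funext j
  simp only [face, barMerge, Nat.add_lt_add_iff_right, Nat.add_right_cancel_iff]

lemma barD_single (n : ℕ) (g : Fin (n+1) → G) :
    barD G n (Finsupp.single g 1) =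
      ∑ i ∈ Finset.range (n+2), ((-1:ℤ)^i) • Finsupp.single (face n i g) (1:ℤ) := by
  rw [Finset.sum_range_succ, Finset.sum_range_succ']
  rw [barD]
  simp only [Finsupp.lift_apply, Finsupp.sum_single_index, zero_smul, one_smul]
  rw [face_zero, face_last,
    Finset.sum_range (n := n) (fun k => ((-1:ℤ)^(k+1)) • Finsupp.single (face n (k+1) g) (1:ℤ))]
  simp only [face_succ, pow_zero, one_smul]
  abel

lemma face_face (n : ℕ) (i j : ℕ) (hij : i < j) (hj : j ≤ n + 2) (g : Fin (n+2) → G) :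
    face n i (face (n+1) j g) = face n (j-1) (face (n+1) i g) := by
  funext p
  simp only [face, Fin.coe_castSucc, Fin.val_succ]
  split_ifs <;>
    first
      | omega
      | (simp only [Fin.succ_castSucc, mul_assoc]; done)
      | rfl


lemma barD_barD (G : Type*) [Group G] (n : ℕ) :
    (barD G n).comp (barD G (n+1)) = 0 := by
  refine Finsupp.lhom_ext' fun g => LinearMap.ext_ring ?_
  simp only [LinearMap.comp_apply, Finsupp.lsingle_apply, LinearMap.zero_apply]
  rw [barD_single, map_sum]
  simp only [map_zsmul, barD_single, Finset.smul_sum, smul_smul, ← pow_add]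
  rw [← Finset.sum_product']
  refine Finset.sum_involution
    (fun a _ => if a.2 < a.1 then (a.2, a.1 - 1) else (a.2 + 1, a.1))
    ?_ ?_ ?_ ?_
  · rintro ⟨j, i⟩ hm
    simp only [Finset.mem_product, Finset.mem_range] at hm
    by_cases h : i < j
    · simp only [if_pos h]
      rw [face_face n i j h (by omega) g]
      have hexp : (-1:ℤ)^(j+i) = -(-1:ℤ)^(i+(j-1)) := by
        have : j + i = (i + (j-1)) + 1 := by omega
        rw [this, pow_succ]; ring
      rw [hexp, ← add_smul]
      simp
    · simp only [if_neg h]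
      have hf : face n j (face (n+1) (i+1) g) = face n i (face (n+1) j g) := by
        have := face_face n j (i+1) (by omega) (by omega) g
        simpa using this
      rw [hf]
      have hexp : (-1:ℤ)^(i+1+j) = -(-1:ℤ)^(j+i) := by
        have : i+1+j = (j+i) + 1 := by omega
        rw [this, pow_succ]; ring
      rw [hexp, ← add_smul]
      simp
  · rintro ⟨j, i⟩ _ _
    dsimp only
    by_cases h : i < j
    · rw [if_pos h]; simp only [Ne, Prod.mk.injEq]; omega
    · rw [if_neg h]; simp only [Ne, Prod.mk.injEq]; omega
  · rintro ⟨j, i⟩ hm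
    simp only [Finset.mem_product, Finset.mem_range] at hm
    dsimp only
    by_cases h : i < j
    · rw [if_pos h]; simp only [Finset.mem_product, Finset.mem_range]; omega
    · rw [if_neg h]; simp only [Finset.mem_product, Finset.mem_range]; omega
  · rintro ⟨j, i⟩ hm
    simp only [Finset.mem_product, Finset.mem_range] at hm
    dsimp only
    by_cases h : i < j
    · rw [if_pos h]; dsimp only; rw [if_neg (by omega : ¬ (j-1 < i))]
      simp only [Prod.mk.injEq, and_true, true_and]; omega
    · rw [if_neg h]; dsimp only; rw [if_pos (by omega : j < i + 1)]
      simp only [Prod.mk.injEq, and_true, true_and]; omega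


noncomputable instance : DivisibleBy (Additive Circle) ℤ :=
  Function.Surjective.divisibleBy Circle.expHom
    (fun z => ⟨Complex.arg (Additive.toMul z : Circle),
      congrArg Additive.ofMul (Circle.exp_arg (Additive.toMul z))⟩)
    (fun a n => map_zsmul Circle.expHom n a)

lemma extendCircle {X Y : Type u} [AddCommGroup X] [AddCommGroup Y]
    [Module ℤ X] [Module ℤ Y] (ι : X →ₗ[ℤ] Y) (hι : Function.Injective ι)
    (f : X →ₗ[ℤ] Additive Circle) :
    ∃ F : Y →ₗ[ℤ] Additive Circle, ∀ x, F (ι x) = f x := by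
  haveI : Module.Injective ℤ (ULift.{u} (Additive Circle)) :=
    Module.ulift_injective_of_injective ℤ ((Module.Baer.of_divisible (Additive Circle)).injective)
  obtain ⟨F, hF⟩ := Module.Injective.out (Q := ULift.{u} (Additive Circle)) ι hι
    ((ULift.moduleEquiv (R := ℤ) (M := Additive Circle)).symm.toLinearMap ∘ₗ f)
  refine ⟨(ULift.moduleEquiv (R := ℤ) (M := Additive Circle)).toLinearMap ∘ₗ F, fun x => ?_⟩
  have := hF x
  simp only [LinearMap.comp_apply] at this ⊢
  rw [this]
  simp

lemma lift_barD_single (n : ℕ) (ν : (Fin n → G) → Circle)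
    (N : BarChain G n →ₗ[ℤ] Additive Circle)
    (hN : ∀ h, N (Finsupp.single h 1) = Additive.ofMul (ν h)) (g : Fin (n+1) → G) :
    N (barD G n (Finsupp.single g 1)) = Additive.ofMul (mcoboundary ν g) := by
  rw [barD]
  simp only [Finsupp.lift_apply, Finsupp.sum_single_index, zero_smul, one_smul]
  rw [map_add, map_add, map_sum, map_zsmul]
  simp only [map_zsmul, hN, mcoboundary, ofMul_mul, ofMul_prod, ofMul_zpow]

end DT

open DT in
/-- if `m·Hₙ(G,ℤ) = 0`, every class in `Hⁿ(G,U(1))` has a representative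
cocycle with values in the `m`-th roots of unity `μ_m ≤ U(1)`. -/
theorem stmt19 (G : Type*) [Group G] [Finite G] (k m : ℕ) (hm : 0 < m)
    (htor : ∀ z ∈ cycles G k, (m : ℤ) • z ∈ boundaries G k)
    (ω : (Fin (k+1) → G) → Circle) (hω : IsMCocycle ω) :
    ∃ ω' : (Fin (k+1) → G) → Circle, IsMCocycle ω' ∧ (∀ g, ω' g ^ m = 1) ∧
      ∃ α : (Fin k → G) → Circle, ω = ω' * mcoboundary α := by
  classical
  haveI : Fintype G := Fintype.ofFinite G
  let Φ : BarChain G (k+1) →ₗ[ℤ] Additive Circle :=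
    Finsupp.lift (Additive Circle) ℤ (Fin (k+1) → G) (fun g => Additive.ofMul (ω g))
  have hΦs : ∀ h : Fin (k+1) → G, Φ (Finsupp.single h 1) = Additive.ofMul (ω h) := by
    intro h
    simp [Φ, Finsupp.lift_apply, Finsupp.sum_single_index]
  have hΦBD : ∀ x, Φ (barD G (k+1) x) = 0 := by
    have hc : Φ ∘ₗ barD G (k+1) = 0 := by
      refine Finsupp.lhom_ext' fun g => LinearMap.ext_ring ?_
      simp only [LinearMap.comp_apply, Finsupp.lsingle_apply, LinearMap.zero_apply]
      rw [lift_barD_single (k+1) ω Φ hΦs g, hω]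
      rfl
    intro x; exact DFunLike.congr_fun hc x
  have hΦB : ∀ b ∈ boundaries G k, Φ b = 0 := by
    rintro b ⟨x, rfl⟩; exact hΦBD x
  obtain ⟨s, hs⟩ := Module.projective_lifting_property (barD G k).rangeRestrict
    (LinearMap.id) (LinearMap.surjective_rangeRestrict _)
  let r : BarChain G (k+1) →ₗ[ℤ] BarChain G (k+1) :=
    LinearMap.id - (s ∘ₗ (barD G k).rangeRestrict)
  have hDs : ∀ w : LinearMap.range (barD G k), barD G k (s w) = ↑w := by
    intro w
    have h1 : (barD G k).rangeRestrict (s w) = w := DFunLike.congr_fun hs w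
    have h2 := congrArg Subtype.val h1
    simpa using h2
  have hr_def : ∀ x, r x = x - s ((barD G k).rangeRestrict x) := fun x => rfl
  have hr_cyc : ∀ x, r x ∈ cycles G k := by
    intro x
    have : barD G k (r x) = 0 := by
      rw [hr_def, map_sub, hDs]
      simp
    exact LinearMap.mem_ker.mpr this
  have hr_fix : ∀ z ∈ cycles G k, r z = z := by
    intro z hz
    have h0 : (barD G k).rangeRestrict z = 0 := by
      apply Subtype.ext
      simpa using (LinearMap.mem_ker.mp hz : barD G k z = 0)
    rw [hr_def, h0]
    simp
  let Φ' : BarChain G (k+1) →ₗ[ℤ] Additive Circle := Φ ∘ₗ r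
  have hΦ'B : ∀ b ∈ boundaries G k, Φ' b = 0 := by
    intro b hb
    have hbz : b ∈ cycles G k := by
      obtain ⟨x, rfl⟩ := hb
      exact LinearMap.mem_ker.mpr (DFunLike.congr_fun (barD_barD G k) x)
    show Φ (r b) = 0
    rw [hr_fix b hbz]
    exact hΦB b hb
  have hΦ'm : ∀ x, (m:ℤ) • Φ' x = 0 := by
    intro x
    have hmem : (m:ℤ) • (r x) ∈ boundaries G k := htor _ (hr_cyc x)
    have : (m:ℤ) • Φ' x = Φ ((m:ℤ) • r x) := by
      rw [map_smul]; rfl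
    rw [this]
    exact hΦB _ hmem
  set ω' : (Fin (k+1) → G) → Circle :=
    fun g => Additive.toMul (Φ' (Finsupp.single g 1)) with hω'def
  have hω's : ∀ h : Fin (k+1) → G, Φ' (Finsupp.single h 1) = Additive.ofMul (ω' h) :=
    fun h => rfl
  refine ⟨ω', ?_, ?_, ?_⟩
  · funext g
    have h1 := lift_barD_single (k+1) ω' Φ' hω's g
    rw [hΦ'B _ ⟨_, rfl⟩] at h1
    have h2 := congrArg Additive.toMul h1.symm
    simpa using h2
  · intro g
    have h1 := hΦ'm (Finsupp.single g 1)
    rw [hω's g, ← ofMul_zpow] at h1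
    have h2 := congrArg Additive.toMul h1
    rw [← zpow_natCast]
    simpa using h2
  · let Ψ : BarChain G (k+1) →ₗ[ℤ] Additive Circle := Φ - Φ'
    have hΨZ : ∀ z ∈ cycles G k, Ψ z = 0 := by
      intro z hz
      show Φ z - Φ' z = 0
      have : Φ' z = Φ z := by
        show Φ (r z) = Φ z
        rw [hr_fix z hz]
      rw [this, sub_self]
    have hΨfac : ∀ x, Ψ (s ((barD G k).rangeRestrict x)) = Ψ x := by
      intro x
      have h1 : x - s ((barD G k).rangeRestrict x) ∈ cycles G k := by
        rw [← hr_def]; exact hr_cyc x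
      have h2 := hΨZ _ h1
      rw [map_sub, sub_eq_zero] at h2
      exact h2.symm
    obtain ⟨F, hF⟩ := extendCircle (LinearMap.range (barD G k)).subtype
      (Submodule.injective_subtype _) (Ψ ∘ₗ s)
    let α : (Fin k → G) → Circle := fun h => Additive.toMul (F (Finsupp.single h 1))
    have hFs : ∀ h : Fin k → G, F (Finsupp.single h 1) = Additive.ofMul (α h) := fun h => rfl
    refine ⟨α, ?_⟩
    funext g
    have h1 : F (barD G k (Finsupp.single g 1)) = Additive.ofMul (mcoboundary α g) :=
      lift_barD_single k α F hFs g
    have h2 : F (barD G k (Finsupp.single g 1)) = Ψ (Finsupp.single g 1) := by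
      have h3 : barD G k (Finsupp.single g 1) =
          (LinearMap.range (barD G k)).subtype
            ((barD G k).rangeRestrict (Finsupp.single g 1)) := rfl
      rw [h3, hF ((barD G k).rangeRestrict (Finsupp.single g 1))]
      exact hΨfac (Finsupp.single g 1)
    have h4 : Additive.ofMul (mcoboundary α g) =
        Additive.ofMul (ω g) - Additive.ofMul (ω' g) := by
      rw [← h1, h2]
      show Φ (Finsupp.single g 1) - Φ' (Finsupp.single g 1) = _
      rw [hΦs g, hω's g]
    have h5 : mcoboundary α g = ω g / ω' g := by
      have := congrArg Additive.toMul h4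
      simpa [div_eq_mul_inv] using this
    show ω g = ω' g * mcoboundary α g
    rw [h5, mul_div_cancel]
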